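/- Let ξ, ξ₁, ξ₂, … be i.i.d. real random variables with E ξ = −a < 0, and let τ = min{n ≥ 1 : ξ₁ + … + ξ_n ≤ 0}. Let α > 1 and g(x) = (log max(x,1))^α. Assume E exp(c ξ) = ∞ for every c > 0 and E exp(g(ξ)) < ∞. Then for every ε ∈ (0,1), E exp((1−ε) g(a τ)) < ∞ (i.e., the conclusion of the main theorem holds with δ = 0). -/

import Mathlib

open MeasureTheory ProbabilityTheory Filter Set

set_option maxHeartbeats 1600000

private lemma exp_le_one_add_add_sq {y : ℝ} (hy : |y| ≤ 1) :
    Real.exp y ≤ 1 + y + y ^ 2 := by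
  have h := abs_le.mp (Real.abs_exp_sub_one_sub_id_le hy)
  nlinarith [h.1, h.2]

private lemma aux_tau_gt {Ω : Type*} (ξ : ℕ → Ω → ℝ) (τ : Ω → ℕ)
    (hτ : ∀ ω, τ ω = sInf {n : ℕ | 1 ≤ n ∧ ∑ i ∈ Finset.range n, ξ i ω ≤ 0})
    (n : ℕ) (hn : 1 ≤ n) {ω : Ω} (h : n < τ ω) :
    0 < ∑ i ∈ Finset.range n, ξ i ω := by
  by_contra hc
  push_neg at hc
  have hmem : n ∈ {m : ℕ | 1 ≤ m ∧ ∑ i ∈ Finset.range m, ξ i ω ≤ 0} := ⟨hn, hc⟩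
  have h2 := Nat.sInf_le hmem
  rw [← hτ ω] at h2
  omega

private lemma aux_tau_meas {Ω : Type*} [MeasurableSpace Ω] (ξ : ℕ → Ω → ℝ)
    (hmeas : ∀ i, Measurable (ξ i)) (τ : Ω → ℕ)
    (hτ : ∀ ω, τ ω = sInf {n : ℕ | 1 ≤ n ∧ ∑ i ∈ Finset.range n, ξ i ω ≤ 0}) :
    Measurable τ := by
  have hPmeas : ∀ m : ℕ,
      MeasurableSet {ω : Ω | 1 ≤ m ∧ ∑ i ∈ Finset.range m, ξ i ω ≤ 0} := by
    intro m
    have h : {ω : Ω | 1 ≤ m ∧ ∑ i ∈ Finset.range m, ξ i ω ≤ 0}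
        = {ω : Ω | (1:ℕ) ≤ m} ∩ {ω : Ω | ∑ i ∈ Finset.range m, ξ i ω ≤ 0} := rfl
    rw [h]
    exact (MeasurableSet.const _).inter
      (measurableSet_le (Finset.measurable_sum _ fun i _ => hmeas i) measurable_const)
  apply measurable_to_countable'
  intro n
  match n with
  | 0 =>
    have h0 : τ ⁻¹' {0} = ⋂ m : ℕ, {ω : Ω | 1 ≤ m ∧ ∑ i ∈ Finset.range m, ξ i ω ≤ 0}ᶜ := by
      ext ω
      simp only [mem_preimage, mem_singleton_iff, mem_iInter, mem_compl_iff, mem_setOf_eq]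
      rw [hτ ω]
      constructor
      · intro h m hm
        rcases Nat.sInf_eq_zero.mp h with h0' | hemp
        · exact absurd h0'.1 (by omega)
        · exact (Set.eq_empty_iff_forall_notMem.mp hemp m) hm
      · intro h
        rw [Nat.sInf_eq_zero]
        right
        exact Set.eq_empty_iff_forall_notMem.mpr h
    rw [h0]
    exact MeasurableSet.iInter fun m => (hPmeas m).compl
  | Nat.succ k =>
    have h1 : τ ⁻¹' {k+1} = {ω : Ω | 1 ≤ k+1 ∧ ∑ i ∈ Finset.range (k+1), ξ i ω ≤ 0}
        ∩ ⋂ m ∈ Finset.range (k+1), {ω : Ω | 1 ≤ m ∧ ∑ i ∈ Finset.range m, ξ i ω ≤ 0}ᶜ := by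
      ext ω
      simp only [mem_preimage, mem_singleton_iff, mem_inter_iff, mem_setOf_eq,
        Finset.mem_range, mem_iInter, mem_compl_iff]
      rw [hτ ω]
      constructor
      · intro h
        have hne : {m : ℕ | 1 ≤ m ∧ ∑ i ∈ Finset.range m, ξ i ω ≤ 0}.Nonempty := by
          by_contra hc
          rw [Set.not_nonempty_iff_eq_empty] at hc
          rw [hc, Nat.sInf_empty] at h
          omega
        have hmem := Nat.sInf_mem hne
        rw [h] at hmem
        refine ⟨hmem, fun m hm hmem' => ?_⟩
        have h2 := Nat.sInf_le (show m ∈ {m : ℕ | 1 ≤ m ∧ ∑ i ∈ Finset.range m, ξ i ω ≤ 0} from hmem')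
        rw [h] at h2
        omega
      · rintro ⟨hmem, hlt⟩
        have hle := Nat.sInf_le (show k+1 ∈ {m : ℕ | 1 ≤ m ∧ ∑ i ∈ Finset.range m, ξ i ω ≤ 0} from hmem)
        have hmem2 := Nat.sInf_mem (show {m : ℕ | 1 ≤ m ∧ ∑ i ∈ Finset.range m, ξ i ω ≤ 0}.Nonempty from ⟨k+1, hmem⟩)
        by_contra hne'
        have hlt2 : sInf {m : ℕ | 1 ≤ m ∧ ∑ i ∈ Finset.range m, ξ i ω ≤ 0} < k+1 :=
          lt_of_le_of_ne hle hne'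
        exact hlt _ hlt2 hmem2
    rw [h1]
    exact (hPmeas _).inter
      (MeasurableSet.biInter (Finset.range (k+1)).countable_toSet fun m _ => (hPmeas m).compl)

private lemma aux_sq_bound {α : ℝ} (hα : 1 < α) (x : ℝ) :
    (max x 0)^2 ≤ Real.exp (2 * (2:ℝ) ^ ((α-1)⁻¹)) * Real.exp (Real.log (max x 1) ^ α) := by
  have hT1 : (1:ℝ) ≤ (2:ℝ) ^ ((α-1)⁻¹) := Real.one_le_rpow one_le_two (inv_nonneg.mpr (by linarith))
  have hexp2 : (1:ℝ) ≤ Real.exp (2 * (2:ℝ) ^ ((α-1)⁻¹)) := Real.one_le_exp (by linarith)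
  have hexpg : (1:ℝ) ≤ Real.exp (Real.log (max x 1) ^ α) :=
    Real.one_le_exp (Real.rpow_nonneg (Real.log_nonneg (le_max_right _ _)) _)
  rcases le_or_gt x 1 with hx | hx
  · have h1 : (max x 0)^2 ≤ 1 := by
      have h2 : max x 0 ≤ 1 := max_le hx zero_le_one
      nlinarith [le_max_right x 0]
    nlinarith
  · have hx0 : 0 < x := lt_trans one_pos hx
    have hmax0 : max x 0 = x := max_eq_left hx0.le
    have hmax1 : max x 1 = x := max_eq_left hx.le
    rw [hmax0, hmax1]
    have ht0 : 0 < Real.log x := Real.log_pos hx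
    set t := Real.log x with htdef
    suffices h : 2*t ≤ 2 * (2:ℝ) ^ ((α-1)⁻¹) + t^α by
      have hxx : x^2 = Real.exp (t + t) := by
        rw [Real.exp_add, htdef, Real.exp_log hx0, pow_two]
      rw [hxx, ← Real.exp_add]
      exact Real.exp_le_exp.mpr (by linarith)
    rcases le_or_gt ((2:ℝ) ^ ((α-1)⁻¹)) t with hTt | htT
    · have h1 : (2:ℝ) ≤ t^(α-1) := by
        have he : ((2:ℝ) ^ ((α-1)⁻¹)) ^ (α-1) = 2 := by
          rw [← Real.rpow_mul (by norm_num : (0:ℝ) ≤ 2),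
            inv_mul_cancel₀ (by linarith : α - 1 ≠ 0), Real.rpow_one]
        calc (2:ℝ) = ((2:ℝ) ^ ((α-1)⁻¹)) ^ (α-1) := he.symm
          _ ≤ t^(α-1) := Real.rpow_le_rpow (by positivity) hTt (by linarith)
      have h2 : t^α = t^(α-1) * t := by
        have h3 : t^((α-1)+1) = t^(α-1) * t := by
          rw [Real.rpow_add ht0, Real.rpow_one]
        rw [show (α-1)+1 = α by ring] at h3
        exact h3
      nlinarith
    · have h3 : 0 ≤ t^α := Real.rpow_nonneg ht0.le _
      linarith

private lemma aux_markov {Ω : Type*} [MeasurableSpace Ω] {μ : Measure Ω} (X : Ω → ℝ)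
    (α : ℝ) (hα : 0 ≤ α)
    (hgmom : Integrable (fun ω => Real.exp (Real.log (max (X ω) 1) ^ α)) μ)
    (M : ℝ) (hM : 1 ≤ M) :
    μ {ω | M < X ω} ≤ ENNReal.ofReal
      ((∫ ω, Real.exp (Real.log (max (X ω) 1) ^ α) ∂μ) * Real.exp (-(Real.log M ^ α))) := by
  set G := ∫ ω, Real.exp (Real.log (max (X ω) 1) ^ α) ∂μ with hGdef
  set c := Real.exp (Real.log M ^ α) with hcdef
  have hcpos : 0 < c := Real.exp_pos _
  have hsub : {ω | M < X ω} ⊆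
      {ω | ENNReal.ofReal c ≤ ENNReal.ofReal (Real.exp (Real.log (max (X ω) 1) ^ α))} := by
    intro ω hω
    simp only [mem_setOf_eq] at hω ⊢
    apply ENNReal.ofReal_le_ofReal
    apply Real.exp_le_exp.mpr
    have h2 : M ≤ max (X ω) 1 := le_trans hω.le (le_max_left _ _)
    exact Real.rpow_le_rpow (Real.log_nonneg hM)
      (Real.log_le_log (by linarith) h2) hα
  have hmarkov := mul_meas_ge_le_lintegral₀
    (μ := μ) (f := fun ω => ENNReal.ofReal (Real.exp (Real.log (max (X ω) 1) ^ α)))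
    (ENNReal.measurable_ofReal.comp_aemeasurable hgmom.aemeasurable) (ENNReal.ofReal c)
  have hlint : ∫⁻ ω, ENNReal.ofReal (Real.exp (Real.log (max (X ω) 1) ^ α)) ∂μ
      = ENNReal.ofReal G :=
    (ofReal_integral_eq_lintegral_ofReal hgmom (ae_of_all _ fun ω => (Real.exp_pos _).le)).symm
  have hkey : ENNReal.ofReal c * μ {ω | M < X ω} ≤ ENNReal.ofReal G := by
    calc ENNReal.ofReal c * μ {ω | M < X ω}
        ≤ ENNReal.ofReal c * μ {ω | ENNReal.ofReal c
            ≤ ENNReal.ofReal (Real.exp (Real.log (max (X ω) 1) ^ α))} :=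
          mul_le_mul_right (measure_mono hsub) _
      _ ≤ ∫⁻ ω, ENNReal.ofReal (Real.exp (Real.log (max (X ω) 1) ^ α)) ∂μ := hmarkov
      _ = ENNReal.ofReal G := hlint
  have hne : ENNReal.ofReal c ≠ 0 := (ENNReal.ofReal_pos.mpr hcpos).ne'
  have hdiv : μ {ω | M < X ω} ≤ ENNReal.ofReal G / ENNReal.ofReal c :=
    (ENNReal.le_div_iff_mul_le (Or.inl hne) (Or.inl ENNReal.ofReal_ne_top)).mpr
      (by rwa [mul_comm] at hkey)
  calc μ {ω | M < X ω} ≤ ENNReal.ofReal G / ENNReal.ofReal c := hdiv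
    _ = ENNReal.ofReal (G / c) := (ENNReal.ofReal_div_of_pos hcpos).symm
    _ = ENNReal.ofReal (G * Real.exp (-(Real.log M ^ α))) := by
        rw [Real.exp_neg, div_eq_mul_inv, hcdef]

private lemma aux_chernoff {Ω : Type*} [MeasurableSpace Ω] {μ : Measure Ω}
    [IsProbabilityMeasure μ]
    (η : ℕ → Ω → ℝ) (hmeas : ∀ i, Measurable (η i))
    (hindep : iIndepFun η μ)
    (hident : ∀ i, IdentDistrib (η i) (η 0) μ μ)
    (B : ℝ) (hB : ∀ i ω, |η i ω| ≤ B)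
    (t m m2 : ℝ) (ht : 0 ≤ t) (hts : ∀ ω, |t * η 0 ω| ≤ 1)
    (hm : ∫ ω, η 0 ω ∂μ ≤ m) (hm2 : ∫ ω, (η 0 ω)^2 ∂μ ≤ m2) (n : ℕ) :
    μ {ω | 0 ≤ ∑ i ∈ Finset.range n, η i ω}
      ≤ ENNReal.ofReal (Real.exp ((n:ℝ) * (t * m + t^2 * m2))) := by
  have hint0 : Integrable (η 0) μ :=
    Integrable.mono' (integrable_const B) (hmeas 0).aestronglyMeasurable
      (ae_of_all _ fun ω => hB 0 ω)
  have hintsq : Integrable (fun ω => (η 0 ω)^2) μ := by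
    refine Integrable.mono' (integrable_const (B^2))
      ((hmeas 0).pow_const 2).aestronglyMeasurable (ae_of_all _ fun ω => ?_)
    rw [Real.norm_eq_abs, abs_pow]
    exact pow_le_pow_left₀ (abs_nonneg _) (hB 0 ω) 2
  have hexp0 : Integrable (fun ω => Real.exp (t * η 0 ω)) μ := by
    refine Integrable.mono' (integrable_const (Real.exp (t*B)))
      ((hmeas 0).const_mul t).exp.aestronglyMeasurable (ae_of_all _ fun ω => ?_)
    rw [Real.norm_eq_abs, abs_of_pos (Real.exp_pos _)]
    exact Real.exp_le_exp.mpr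
      (mul_le_mul_of_nonneg_left (le_trans (le_abs_self _) (hB 0 ω)) ht)
  have hmgf1 : mgf (η 0) μ t ≤ Real.exp (t * m + t^2 * m2) := by
    have hA : Integrable (fun ω => 1 + t * η 0 ω) μ := by
      exact (integrable_const 1).add (hint0.const_mul t)
    have hint_rhs : Integrable (fun ω => 1 + t * η 0 ω + t^2 * (η 0 ω)^2) μ := by
      exact hA.add (hintsq.const_mul (t^2))
    have h1 : mgf (η 0) μ t ≤ ∫ ω, (1 + t * η 0 ω + t^2 * (η 0 ω)^2) ∂μ := by
      refine integral_mono hexp0 hint_rhs fun ω => ?_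
      calc Real.exp (t * η 0 ω) ≤ 1 + t * η 0 ω + (t * η 0 ω)^2 :=
            exp_le_one_add_add_sq (hts ω)
        _ = 1 + t * η 0 ω + t^2 * (η 0 ω)^2 := by ring
    have h2 : ∫ ω, (1 + t * η 0 ω + t^2 * (η 0 ω)^2) ∂μ
        = 1 + t * (∫ ω, η 0 ω ∂μ) + t^2 * (∫ ω, (η 0 ω)^2 ∂μ) := by
      rw [integral_add hA (hintsq.const_mul (t^2)),
        integral_add (integrable_const 1) (hint0.const_mul t), integral_const,
        integral_const_mul, integral_const_mul]
      simp
    have h3 : 1 + t * (∫ ω, η 0 ω ∂μ) + t^2 * (∫ ω, (η 0 ω)^2 ∂μ)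
        ≤ 1 + (t * m + t^2 * m2) := by
      have ha := mul_le_mul_of_nonneg_left hm ht
      have hb := mul_le_mul_of_nonneg_left hm2 (sq_nonneg t)
      nlinarith [sq_nonneg t]
    calc mgf (η 0) μ t ≤ ∫ ω, (1 + t * η 0 ω + t^2 * (η 0 ω)^2) ∂μ := h1
      _ = 1 + t * (∫ ω, η 0 ω ∂μ) + t^2 * (∫ ω, (η 0 ω)^2 ∂μ) := h2
      _ ≤ 1 + (t * m + t^2 * m2) := h3
      _ ≤ Real.exp (t * m + t^2 * m2) := by
          linarith [Real.add_one_le_exp (t * m + t^2 * m2)]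
  have hmgfi : ∀ i, mgf (η i) μ t = mgf (η 0) μ t := by
    intro i
    have hg : Measurable fun x : ℝ => Real.exp (t * x) := (measurable_id.const_mul t).exp
    exact ((hident i).comp hg).integral_eq
  have hsum_int : Integrable (fun ω => Real.exp (t * (∑ i ∈ Finset.range n, η i) ω)) μ := by
    refine Integrable.mono' (integrable_const (Real.exp (t * ((n:ℝ) * B)))) ?_
      (ae_of_all _ fun ω => ?_)
    · have hsm : Measurable fun ω => (∑ i ∈ Finset.range n, η i) ω := by
        simp only [Finset.sum_apply]
        exact Finset.measurable_sum _ fun i _ => hmeas i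
      exact (hsm.const_mul t).exp.aestronglyMeasurable
    · rw [Real.norm_eq_abs, abs_of_pos (Real.exp_pos _)]
      apply Real.exp_le_exp.mpr
      apply mul_le_mul_of_nonneg_left ?_ ht
      rw [Finset.sum_apply]
      calc ∑ i ∈ Finset.range n, η i ω ≤ ∑ _i ∈ Finset.range n, B :=
            Finset.sum_le_sum fun i _ => le_trans (le_abs_self _) (hB i ω)
        _ = (n:ℝ) * B := by
            rw [Finset.sum_const, Finset.card_range, nsmul_eq_mul]
  have hch := measure_ge_le_exp_mul_mgf (μ := μ) (X := ∑ i ∈ Finset.range n, η i) 0 ht hsum_int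
  rw [mul_zero, Real.exp_zero, one_mul] at hch
  have hmgfsum : mgf (∑ i ∈ Finset.range n, η i) μ t = mgf (η 0) μ t ^ n := by
    rw [hindep.mgf_sum hmeas]
    rw [Finset.prod_congr rfl fun i _ => hmgfi i, Finset.prod_const, Finset.card_range]
  have hfinal : (μ {ω | (0:ℝ) ≤ (∑ i ∈ Finset.range n, η i) ω}).toReal
      ≤ Real.exp ((n:ℝ) * (t * m + t^2 * m2)) := by
    calc (μ {ω | (0:ℝ) ≤ (∑ i ∈ Finset.range n, η i) ω}).toReal
        ≤ mgf (∑ i ∈ Finset.range n, η i) μ t := hch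
      _ = mgf (η 0) μ t ^ n := hmgfsum
      _ ≤ Real.exp (t * m + t^2 * m2) ^ n := pow_le_pow_left₀ mgf_nonneg hmgf1 n
      _ = Real.exp ((n:ℝ) * (t * m + t^2 * m2)) := (Real.exp_nat_mul _ n).symm
  have hset : {ω : Ω | 0 ≤ ∑ i ∈ Finset.range n, η i ω}
      = {ω : Ω | (0:ℝ) ≤ (∑ i ∈ Finset.range n, η i) ω} := by
    ext ω; simp [Finset.sum_apply]
  rw [hset, ← ENNReal.ofReal_toReal (measure_ne_top μ _)]
  exact ENNReal.ofReal_le_ofReal hfinal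

/-- **Remark 2, lognormal-type case.** For `g(x) = (log max(x,1))^α` with `α > 1`,
the conclusion of the main theorem holds with `δ = 0`: if `E exp(c ξ) = ∞` for all
`c > 0` and `E exp(g(ξ)) < ∞`, then `E exp((1-ε) g(a τ)) < ∞` for every `ε ∈ (0,1)`. -/
theorem ladder_epoch_lognormal_moment
    {Ω : Type*} [MeasurableSpace Ω] {μ : Measure Ω} [IsProbabilityMeasure μ]
    (ξ : ℕ → Ω → ℝ) (hmeas : ∀ i, Measurable (ξ i))
    (hindep : iIndepFun ξ μ)
    (hident : ∀ i, IdentDistrib (ξ i) (ξ 0) μ μ)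
    (a : ℝ) (ha : 0 < a)
    (hint : Integrable (ξ 0) μ) (hmean : ∫ ω, ξ 0 ω ∂μ = -a)
    (hheavy : ∀ c : ℝ, 0 < c → ¬ Integrable (fun ω => Real.exp (c * ξ 0 ω)) μ)
    (α : ℝ) (hα : 1 < α)
    (hgmom : Integrable (fun ω => Real.exp (Real.log (max (ξ 0 ω) 1) ^ α)) μ)
    (τ : Ω → ℕ)
    (hτ : ∀ ω, τ ω = sInf {n : ℕ | 1 ≤ n ∧ ∑ i ∈ Finset.range n, ξ i ω ≤ 0})
    (ε : ℝ) (hε : ε ∈ Set.Ioo (0:ℝ) 1) :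
    Integrable
      (fun ω => Real.exp ((1 - ε) * Real.log (max (a * (τ ω : ℝ)) 1) ^ α)) μ := by
  obtain ⟨hε0, hε1⟩ := hε
  have hα0 : (0:ℝ) < α := by linarith
  have hτmeas : Measurable τ := aux_tau_meas ξ hmeas τ hτ
  -- the exponential moment of ξ₀
  set G := ∫ ω, Real.exp (Real.log (max (ξ 0 ω) 1) ^ α) ∂μ with hGdef
  have hG1 : 1 ≤ G := by
    have h := integral_mono (integrable_const (1:ℝ)) hgmom
      (fun ω => Real.one_le_exp (Real.rpow_nonneg (Real.log_nonneg (le_max_right _ _)) _))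
    simpa using h
  have hGpos : 0 < G := lt_of_lt_of_le one_pos hG1
  clear_value G
  -- choice of the lower truncation level K
  have htrunc : Tendsto (fun K : ℕ => ∫ ω, max (ξ 0 ω) (-(K:ℝ)) ∂μ) atTop (nhds (-a)) := by
    rw [← hmean]
    refine tendsto_integral_of_dominated_convergence (fun ω => |ξ 0 ω|)
      (fun K => ((hmeas 0).max measurable_const).aestronglyMeasurable) hint.abs
      (fun K => ae_of_all _ fun ω => ?_) (ae_of_all _ fun ω => ?_)
    · rw [Real.norm_eq_abs, abs_le]
      constructor
      · exact le_trans (neg_abs_le _) (le_max_left _ _)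
      · exact max_le (le_abs_self _)
          (le_trans (neg_nonpos.mpr (Nat.cast_nonneg K)) (abs_nonneg _))
    · refine Tendsto.congr' ?_ (tendsto_const_nhds (x := ξ 0 ω))
      filter_upwards [eventually_ge_atTop ⌈|ξ 0 ω|⌉₊] with K hK
      have h1 : |ξ 0 ω| ≤ (K:ℝ) := le_trans (Nat.le_ceil _) (by exact_mod_cast hK)
      exact (max_eq_left (by linarith [neg_abs_le (ξ 0 ω)])).symm
  obtain ⟨K, hK⟩ := (htrunc.eventually_le_const (show -a < -(a/2) by linarith)).exists
  have hKnn : (0:ℝ) ≤ (K:ℝ) := Nat.cast_nonneg K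
  -- square integrability of the positive part
  have hsqmeas : Measurable (fun ω => (max (ξ 0 ω) 0)^2) :=
    ((hmeas 0).max measurable_const).pow_const 2
  have hsqint : Integrable (fun ω => (max (ξ 0 ω) 0)^2) μ := by
    refine Integrable.mono' (hgmom.const_mul (Real.exp (2 * (2:ℝ)^((α-1)⁻¹))))
      hsqmeas.aestronglyMeasurable (ae_of_all _ fun ω => ?_)
    rw [Real.norm_eq_abs, abs_of_nonneg (sq_nonneg _)]
    exact aux_sq_bound hα (ξ 0 ω)
  set Q := ∫ ω, (max (ξ 0 ω) 0)^2 ∂μ with hQdef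
  have hQ0 : 0 ≤ Q := integral_nonneg fun ω => sq_nonneg _
  set σ2 := (K:ℝ)^2 + Q with hσdef
  have hσ0 : 0 ≤ σ2 := by positivity
  clear_value σ2
  clear_value Q
  -- the exponents θ and s
  set θ := max ((1 - ε/2) ^ (α⁻¹ : ℝ)) (3/4:ℝ) with hθdef
  have hθ34 : (3/4:ℝ) ≤ θ := le_max_right _ _
  have hθpos : (0:ℝ) < θ := by linarith
  have hθlt1 : θ < 1 := by
    apply max_lt ?_ (by norm_num)
    exact Real.rpow_lt_one (by linarith) (by linarith) (by positivity)
  have hθα : 1 - ε/2 ≤ θ ^ α := by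
    have h1 : ((1 - ε/2) ^ (α⁻¹ : ℝ)) ^ α = 1 - ε/2 := by
      rw [← Real.rpow_mul (by linarith), inv_mul_cancel₀ (ne_of_gt hα0), Real.rpow_one]
    rw [← h1]
    exact Real.rpow_le_rpow (Real.rpow_nonneg (by linarith) _) (le_max_left _ _) hα0.le
  clear_value θ
  have h1ε : (0:ℝ) < 1 - ε := by linarith
  set r0 := (1 - 3*ε/4)/(1-ε) with hr0def
  have hr0 : 1 < r0 := (one_lt_div h1ε).mpr (by linarith)
  set s := r0 ^ (α⁻¹ : ℝ) - 1 with hsdef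
  have hs : 0 < s := by
    have h1 : 1 < r0 ^ (α⁻¹:ℝ) :=
      (Real.one_lt_rpow_iff_of_pos (by linarith)).mpr (Or.inl ⟨hr0, by positivity⟩)
    simp only [hsdef]
    linarith
  have h1s : (0:ℝ) ≤ 1 + s := by linarith
  have hsα : (1-ε) * (1+s) ^ α = 1 - 3*ε/4 := by
    have h1 : (1 + s : ℝ) = r0 ^ (α⁻¹:ℝ) := by rw [hsdef]; ring
    rw [h1, ← Real.rpow_mul (by positivity : (0:ℝ) ≤ r0),
      inv_mul_cancel₀ (ne_of_gt hα0), Real.rpow_one, hr0def,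
      mul_comm, div_mul_cancel₀ _ (ne_of_gt h1ε)]
  clear_value s
  clear_value r0
  -- the key eventual bound
  have key : ∀ᶠ n : ℕ in atTop,
      ENNReal.ofReal (Real.exp ((1-ε) * Real.log (max (a * ((n+1:ℕ):ℝ)) 1) ^ α))
          * μ {ω | n < τ ω}
        ≤ ENNReal.ofReal ((((n:ℝ))^2)⁻¹) := by
    have hE1 := eventually_ge_atTop (1:ℕ)
    have hE2 := ((tendsto_rpow_atTop hθpos).comp
      tendsto_natCast_atTop_atTop).eventually_ge_atTop ((K:ℝ))
    have hE4 := tendsto_natCast_atTop_atTop.eventually_ge_atTop (1/a)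
    have hE5 := (Real.tendsto_log_atTop.comp
      tendsto_natCast_atTop_atTop).eventually_ge_atTop ((Real.log a + Real.log 2)/s)
    have hE6 := ((tendsto_rpow_atTop (show (0:ℝ) < α - 1 by linarith)).comp
      (Real.tendsto_log_atTop.comp tendsto_natCast_atTop_atTop)).eventually_ge_atTop
      ((12 + 4*(Real.log G + Real.log 2))/ε)
    have hE6b := (Real.tendsto_log_atTop.comp
      tendsto_natCast_atTop_atTop).eventually_ge_atTop (1:ℝ)
    have hE7 := tendsto_natCast_atTop_atTop.eventually
      ((isLittleO_log_rpow_rpow_atTop α (show (0:ℝ) < 1 - θ by linarith)).def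
        (show (0:ℝ) < a/8 by linarith))
    have hE8 := tendsto_natCast_atTop_atTop.eventually
      ((isLittleO_log_rpow_atTop (show (0:ℝ) < 1 - θ by linarith)).def
        (show (0:ℝ) < a/16 by linarith))
    have hE9 := ((tendsto_rpow_atTop (show (0:ℝ) < 1 - θ by linarith)).comp
      tendsto_natCast_atTop_atTop).eventually_ge_atTop ((σ2 + Real.log 2)/(a/4))
    filter_upwards [hE1, hE2, hE4, hE5, hE6, hE6b, hE7, hE8, hE9]
      with n h1 h2 h4 h5 h6 h6b h7 h8 h9
    simp only [Function.comp_apply] at h2 h5 h6 h6b h9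
    have hx1 : (1:ℝ) ≤ (n:ℝ) := by exact_mod_cast h1
    have hx0 : (0:ℝ) < (n:ℝ) := by linarith only [hx1]
    have hl0 : 0 ≤ Real.log (n:ℝ) := Real.log_nonneg hx1
    set x := (n:ℝ) with hxdef
    set ℓ := Real.log x with hldef
    set M := x ^ θ with hMdef
    have hM1 : (1:ℝ) ≤ M := by
      calc (1:ℝ) = 1 ^ θ := (Real.one_rpow θ).symm
        _ ≤ x ^ θ := Real.rpow_le_rpow zero_le_one hx1 hθpos.le
    have hM0 : (0:ℝ) < M := by linarith only [hM1]
    have hKM : (K:ℝ) ≤ M := h2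
    set t := M⁻¹ with htdef
    have ht0 : (0:ℝ) ≤ t := by rw [htdef]; exact (inv_pos.mpr hM0).le
    clear_value x ℓ M t
    -- truncated variables and Chernoff bound
    have hφmeas : Measurable (fun y : ℝ => min (max y (-(K:ℝ))) M) :=
      (measurable_id.max measurable_const).min measurable_const
    have hηbound : ∀ i ω, |min (max (ξ i ω) (-(K:ℝ))) M| ≤ M := by
      intro i ω
      rw [abs_le]
      constructor
      · have h' : -(K:ℝ) ≤ min (max (ξ i ω) (-(K:ℝ))) M :=
          le_min (le_max_right _ _) (by linarith only [hKnn, hM1])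
        linarith only [h', hKM]
      · exact min_le_right _ _
    have htsb : ∀ ω : Ω, |t * min (max (ξ 0 ω) (-(K:ℝ))) M| ≤ 1 := by
      intro ω
      rw [abs_mul, abs_of_nonneg ht0]
      calc t * |min (max (ξ 0 ω) (-(K:ℝ))) M| ≤ t * M :=
            mul_le_mul_of_nonneg_left (hηbound 0 ω) ht0
        _ = 1 := by rw [htdef]; exact inv_mul_cancel₀ (ne_of_gt hM0)
    have hηint : Integrable (fun ω => min (max (ξ 0 ω) (-(K:ℝ))) M) μ :=
      Integrable.mono' (integrable_const M)
        (((hmeas 0).max measurable_const).min measurable_const).aestronglyMeasurable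
        (ae_of_all _ fun ω => hηbound 0 ω)
    have hmaxint : Integrable (fun ω => max (ξ 0 ω) (-(K:ℝ))) μ := by
      refine Integrable.mono' hint.abs
        ((hmeas 0).max measurable_const).aestronglyMeasurable (ae_of_all _ fun ω => ?_)
      rw [Real.norm_eq_abs, abs_le]
      constructor
      · exact le_trans (neg_abs_le _) (le_max_left _ _)
      · exact max_le (le_abs_self _) (le_trans (neg_nonpos.mpr hKnn) (abs_nonneg _))
    have hηmean : ∫ ω, min (max (ξ 0 ω) (-(K:ℝ))) M ∂μ ≤ -(a/2) :=
      le_trans (integral_mono hηint hmaxint fun ω => min_le_left _ _) hK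
    have hηsqint : Integrable (fun ω => (min (max (ξ 0 ω) (-(K:ℝ))) M)^2) μ := by
      refine Integrable.mono' (integrable_const (M^2))
        ((((hmeas 0).max measurable_const).min measurable_const).pow_const 2).aestronglyMeasurable
        (ae_of_all _ fun ω => ?_)
      rw [Real.norm_eq_abs, abs_pow]
      exact pow_le_pow_left₀ (abs_nonneg _) (hηbound 0 ω) 2
    have hηsq : ∫ ω, (min (max (ξ 0 ω) (-(K:ℝ))) M)^2 ∂μ ≤ σ2 := by
      have hpt : ∀ ω, (min (max (ξ 0 ω) (-(K:ℝ))) M)^2 ≤ (K:ℝ)^2 + (max (ξ 0 ω) 0)^2 := by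
        intro ω
        rcases le_or_gt 0 (min (max (ξ 0 ω) (-(K:ℝ))) M) with h | h
        · have h2' : min (max (ξ 0 ω) (-(K:ℝ))) M ≤ max (ξ 0 ω) 0 :=
            le_trans (min_le_left _ _) (max_le_max le_rfl (neg_nonpos.mpr hKnn))
          have h3 := pow_le_pow_left₀ h h2' 2
          linarith only [h3, sq_nonneg (K:ℝ)]
        · have h3 : (min (max (ξ 0 ω) (-(K:ℝ))) M)^2 ≤ (K:ℝ)^2 :=
            sq_le_sq' (le_min (le_max_right _ _) (by linarith only [hKnn, hM1]))
              (by linarith only [h, hKnn])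
          linarith only [h3, sq_nonneg (max (ξ 0 ω) 0)]
      calc ∫ ω, (min (max (ξ 0 ω) (-(K:ℝ))) M)^2 ∂μ
          ≤ ∫ ω, ((K:ℝ)^2 + (max (ξ 0 ω) 0)^2) ∂μ :=
            integral_mono hηsqint ((integrable_const _).add hsqint) hpt
        _ = (K:ℝ)^2 + Q := by
            rw [integral_add (integrable_const _) hsqint, integral_const]
            simp [hQdef]
        _ = σ2 := hσdef.symm
    have hchern := aux_chernoff (fun i ω => min (max (ξ i ω) (-(K:ℝ))) M)
      (fun i => ((hmeas i).max measurable_const).min measurable_const)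
      (hindep.comp (fun _ y => min (max y (-(K:ℝ))) M) fun _ => hφmeas)
      (fun i => (hident i).comp hφmeas)
      M hηbound t (-(a/2)) σ2 ht0 htsb hηmean hηsq n
    -- union bound
    have hmarkov : ∀ i, μ {ω | M < ξ i ω}
        ≤ ENNReal.ofReal (G * Real.exp (-(Real.log M ^ α))) := by
      intro i
      have hident' : μ {ω | M < ξ i ω} = μ {ω | M < ξ 0 ω} := by
        have h := (hident i).measure_mem_eq (measurableSet_Ioi (a := M))
        simpa [Set.preimage, Set.mem_Ioi] using h
      rw [hident', hGdef]
      exact aux_markov (ξ 0) α hα0.le hgmom M hM1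
    have hincl : {ω | n < τ ω} ⊆ (⋃ i ∈ Finset.range n, {ω | M < ξ i ω})
        ∪ {ω | 0 ≤ ∑ i ∈ Finset.range n, min (max (ξ i ω) (-(K:ℝ))) M} := by
      intro ω hω
      have hS : 0 < ∑ i ∈ Finset.range n, ξ i ω := aux_tau_gt ξ τ hτ n h1 hω
      by_cases hall : ∀ i ∈ Finset.range n, ξ i ω ≤ M
      · right
        have hle : ∑ i ∈ Finset.range n, ξ i ω
            ≤ ∑ i ∈ Finset.range n, min (max (ξ i ω) (-(K:ℝ))) M :=
          Finset.sum_le_sum fun i hi => le_min (le_max_left _ _) (hall i hi)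
        simp only [mem_setOf_eq]
        linarith only [hS, hle]
      · left
        push_neg at hall
        obtain ⟨i, hi, hMi⟩ := hall
        exact Set.mem_biUnion hi hMi
    have hμτ : μ {ω | n < τ ω}
        ≤ ENNReal.ofReal (x * (G * Real.exp (-(Real.log M ^ α))))
          + ENNReal.ofReal (Real.exp ((n:ℝ) * (t * (-(a/2)) + t^2 * σ2))) := by
      calc μ {ω | n < τ ω}
          ≤ μ ((⋃ i ∈ Finset.range n, {ω | M < ξ i ω})
              ∪ {ω | 0 ≤ ∑ i ∈ Finset.range n, min (max (ξ i ω) (-(K:ℝ))) M}) :=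
            measure_mono hincl
        _ ≤ μ (⋃ i ∈ Finset.range n, {ω | M < ξ i ω})
              + μ {ω | 0 ≤ ∑ i ∈ Finset.range n, min (max (ξ i ω) (-(K:ℝ))) M} :=
            measure_union_le _ _
        _ ≤ (∑ i ∈ Finset.range n, μ {ω | M < ξ i ω})
              + ENNReal.ofReal (Real.exp ((n:ℝ) * (t * (-(a/2)) + t^2 * σ2))) :=
            add_le_add (measure_biUnion_finset_le _ _) hchern
        _ ≤ (∑ _i ∈ Finset.range n, ENNReal.ofReal (G * Real.exp (-(Real.log M ^ α))))
              + ENNReal.ofReal (Real.exp ((n:ℝ) * (t * (-(a/2)) + t^2 * σ2))) :=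
            add_le_add (Finset.sum_le_sum fun i _ => hmarkov i) le_rfl
        _ = ENNReal.ofReal (x * (G * Real.exp (-(Real.log M ^ α))))
              + ENNReal.ofReal (Real.exp ((n:ℝ) * (t * (-(a/2)) + t^2 * σ2))) := by
            rw [hxdef, Finset.sum_const, Finset.card_range, nsmul_eq_mul,
              ← ENNReal.ofReal_natCast n, ← ENNReal.ofReal_mul (Nat.cast_nonneg n)]
    -- the exponent bound for the f-factor
    have hfbexp : (1-ε) * Real.log (max (a * ((n+1:ℕ):ℝ)) 1) ^ α ≤ (1 - 3*ε/4) * ℓ^α := by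
      have hcast : ((n+1:ℕ):ℝ) = x + 1 := by rw [hxdef]; push_cast; ring
      rw [hcast]
      have hax : 1 ≤ a * x := by
        have h' := mul_le_mul_of_nonneg_left h4 ha.le
        rwa [mul_one_div, div_self (ne_of_gt ha)] at h'
      have hax1 : 1 ≤ a * (x+1) :=
        le_trans hax (mul_le_mul_of_nonneg_left (by linarith only [] : x ≤ x+1) ha.le)
      rw [max_eq_left hax1]
      have hLnn : 0 ≤ Real.log (a*(x+1)) := Real.log_nonneg hax1
      have hL : Real.log (a*(x+1)) ≤ (1+s) * ℓ := by
        have e1 : Real.log (a*(x+1)) = Real.log a + Real.log (x+1) :=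
          Real.log_mul (ne_of_gt ha) (ne_of_gt (by linarith only [hx0] : (0:ℝ) < x+1))
        have e2 : Real.log (x+1) ≤ Real.log (2*x) :=
          Real.log_le_log (by linarith only [hx0]) (by linarith only [hx1])
        have e3 : Real.log (2*x) = Real.log 2 + Real.log x :=
          Real.log_mul two_ne_zero (ne_of_gt hx0)
        have e4 : Real.log a + Real.log 2 ≤ s * ℓ := by
          have h' := (div_le_iff₀ hs).mp h5
          linarith only [h']
        linarith only [e1, e2, e3, e4, hldef]
      calc (1-ε) * Real.log (a*(x+1)) ^ α ≤ (1-ε) * ((1+s)*ℓ)^α := by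
            apply mul_le_mul_of_nonneg_left (Real.rpow_le_rpow hLnn hL hα0.le)
              (by linarith only [hε1])
        _ = (1 - 3*ε/4) * ℓ^α := by
            rw [Real.mul_rpow h1s hl0, ← mul_assoc, hsα]
    have hlogM : Real.log M ^ α = θ^α * ℓ^α := by
      rw [hMdef, Real.log_rpow hx0, ← hldef, Real.mul_rpow hθpos.le hl0]
    have hexpll : Real.exp (-(2*ℓ) - Real.log 2) = 1/2 * (x^2)⁻¹ := by
      rw [Real.exp_sub, Real.exp_neg, Real.exp_log two_pos]
      have h' : Real.exp (2*ℓ) = x^2 := by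
        rw [two_mul, Real.exp_add, hldef, Real.exp_log hx0, pow_two]
      rw [h']
      ring
    set c1 := Real.log G + Real.log 2 with hc1def
    have hc10 : 0 ≤ c1 := by
      rw [hc1def]
      exact add_nonneg (Real.log_nonneg hG1) (Real.log_nonneg one_le_two)
    clear_value c1
    have hla : 3*ℓ + c1 ≤ (ε/4) * ℓ^α := by
      have hll : 1 ≤ ℓ := h6b
      have hl0' : 0 < ℓ := by linarith only [hll]
      have hsplit : ℓ^α = ℓ^(α-1) * ℓ := by
        have h3 : ℓ^((α-1)+1) = ℓ^(α-1) * ℓ := by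
          rw [Real.rpow_add hl0', Real.rpow_one]
        rw [show (α-1)+1 = α by ring] at h3
        exact h3
      have h12 : 12 + 4*c1 ≤ ε * ℓ^(α-1) := by
        have h' := (div_le_iff₀ hε0).mp h6
        linarith only [h']
      rw [hsplit]
      linarith only [mul_le_mul_of_nonneg_right h12 hl0'.le,
        mul_nonneg hc10 (by linarith only [hll] : (0:ℝ) ≤ ℓ - 1)]
    -- term 1 bound
    have hT1 : Real.exp ((1-ε) * Real.log (max (a * ((n+1:ℕ):ℝ)) 1) ^ α)
        * (x * (G * Real.exp (-(Real.log M ^ α)))) ≤ 1/2 * (x^2)⁻¹ := by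
      have hxg : x * (G * Real.exp (-(Real.log M ^ α)))
          = Real.exp (ℓ + (Real.log G + -(Real.log M ^ α))) := by
        rw [Real.exp_add, Real.exp_add, hldef, Real.exp_log hx0, Real.exp_log hGpos]
      rw [hxg, ← Real.exp_add]
      rw [← hexpll]
      apply Real.exp_le_exp.mpr
      have hθl : (1-ε/2) * ℓ^α ≤ Real.log M ^ α := by
        rw [hlogM]
        exact mul_le_mul_of_nonneg_right hθα (Real.rpow_nonneg hl0 α)
      rw [hc1def] at hla
      linarith only [hfbexp, hθl, hla]
    -- term 2 bound
    have hxt : x * t = x^(1-θ) := by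
      rw [htdef, hMdef, ← Real.rpow_neg hx0.le, show (1-θ) = 1 + (-θ) by ring,
        Real.rpow_add hx0, Real.rpow_one]
    have hxt2 : x * t^2 = x^(1-2*θ) := by
      rw [htdef, hMdef, ← Real.rpow_neg hx0.le]
      have h' : (x^(-θ:ℝ))^2 = x^((-θ)*2) := by
        rw [← Real.rpow_natCast (x^(-θ:ℝ)) 2, ← Real.rpow_mul hx0.le]
        norm_num
      rw [h', show (1-2*θ) = 1 + (-θ)*2 by ring, Real.rpow_add hx0, Real.rpow_one]
    have hbound2 : (n:ℝ) * (t * (-(a/2)) + t^2 * σ2) ≤ -((a/2) * x^(1-θ)) + σ2 := by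
      have hle1 : x^(1-2*θ) ≤ 1 :=
        Real.rpow_le_one_of_one_le_of_nonpos hx1 (by linarith only [hθ34])
      have he : (n:ℝ) * (t * (-(a/2)) + t^2 * σ2)
          = -((a/2) * (x*t)) + (x*t^2)*σ2 := by rw [← hxdef]; ring
      rw [he, hxt, hxt2]
      linarith only [mul_le_mul_of_nonneg_right hle1 hσ0]
    have hT2 : Real.exp ((1-ε) * Real.log (max (a * ((n+1:ℕ):ℝ)) 1) ^ α)
        * Real.exp ((n:ℝ) * (t * (-(a/2)) + t^2 * σ2)) ≤ 1/2 * (x^2)⁻¹ := by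
      rw [← Real.exp_add, ← hexpll]
      apply Real.exp_le_exp.mpr
      have hA : (1-ε) * Real.log (max (a * ((n+1:ℕ):ℝ)) 1) ^ α ≤ ℓ^α := by
        have h' : (1 - 3*ε/4) * ℓ^α ≤ 1 * ℓ^α :=
          mul_le_mul_of_nonneg_right (by linarith only [hε0]) (Real.rpow_nonneg hl0 α)
        linarith only [hfbexp, h']
      have h7' : ℓ^α ≤ a/8 * x^(1-θ) := by
        have := h7
        rw [Real.norm_eq_abs, Real.norm_eq_abs] at this
        calc ℓ^α ≤ |ℓ^α| := le_abs_self _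
          _ ≤ a/8 * |x^(1-θ)| := this
          _ = a/8 * x^(1-θ) := by rw [abs_of_nonneg (Real.rpow_nonneg hx0.le _)]
      have h8' : 2*ℓ ≤ a/8 * x^(1-θ) := by
        have := h8
        rw [Real.norm_eq_abs, Real.norm_eq_abs] at this
        have h'' : ℓ ≤ a/16 * x^(1-θ) := by
          calc ℓ ≤ |ℓ| := le_abs_self _
            _ ≤ a/16 * |x^(1-θ)| := this
            _ = a/16 * x^(1-θ) := by rw [abs_of_nonneg (Real.rpow_nonneg hx0.le _)]
        linarith only [h'']
      have h9' : σ2 + Real.log 2 ≤ a/4 * x^(1-θ) := by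
        have h' := (div_le_iff₀ (show (0:ℝ) < a/4 by linarith only [ha])).mp h9
        linarith only [h']
      linarith only [hA, h7', h8', h9', hbound2]
    -- combine
    calc ENNReal.ofReal (Real.exp ((1-ε) * Real.log (max (a * ((n+1:ℕ):ℝ)) 1) ^ α))
          * μ {ω | n < τ ω}
        ≤ ENNReal.ofReal (Real.exp ((1-ε) * Real.log (max (a * ((n+1:ℕ):ℝ)) 1) ^ α))
          * (ENNReal.ofReal (x * (G * Real.exp (-(Real.log M ^ α))))
            + ENNReal.ofReal (Real.exp ((n:ℝ) * (t * (-(a/2)) + t^2 * σ2)))) :=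
          mul_le_mul_right hμτ _
      _ = ENNReal.ofReal (Real.exp ((1-ε) * Real.log (max (a * ((n+1:ℕ):ℝ)) 1) ^ α)
            * (x * (G * Real.exp (-(Real.log M ^ α)))))
          + ENNReal.ofReal (Real.exp ((1-ε) * Real.log (max (a * ((n+1:ℕ):ℝ)) 1) ^ α)
            * Real.exp ((n:ℝ) * (t * (-(a/2)) + t^2 * σ2))) := by
          rw [mul_add, ← ENNReal.ofReal_mul (Real.exp_pos _).le,
            ← ENNReal.ofReal_mul (Real.exp_pos _).le]
      _ ≤ ENNReal.ofReal (1/2 * (x^2)⁻¹) + ENNReal.ofReal (1/2 * (x^2)⁻¹) :=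
          add_le_add (ENNReal.ofReal_le_ofReal hT1) (ENNReal.ofReal_le_ofReal hT2)
      _ = ENNReal.ofReal ((x^2)⁻¹) := by
          rw [← ENNReal.ofReal_add (by positivity) (by positivity)]
          congr 1
          ring
  -- final assembly
  have hfnat : Measurable (fun m : ℕ => Real.exp ((1 - ε) * Real.log (max (a * (m : ℝ)) 1) ^ α)) :=
    fun _ _ => trivial
  have hfτmeas : Measurable (fun ω => Real.exp ((1 - ε) * Real.log (max (a * (τ ω : ℝ)) 1) ^ α)) :=
    hfnat.comp hτmeas
  constructor
  · exact hfτmeas.aestronglyMeasurable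
  · rw [hasFiniteIntegral_iff_ofReal (ae_of_all _ fun ω => (Real.exp_pos _).le)]
    have heq : ∫⁻ ω, ENNReal.ofReal
          (Real.exp ((1 - ε) * Real.log (max (a * (τ ω : ℝ)) 1) ^ α)) ∂μ
        = ∑' m : ℕ, ENNReal.ofReal
            (Real.exp ((1 - ε) * Real.log (max (a * (m : ℝ)) 1) ^ α)) * μ (τ ⁻¹' {m}) := by
      have hofnat : Measurable (fun m : ℕ => ENNReal.ofReal
          (Real.exp ((1 - ε) * Real.log (max (a * (m : ℝ)) 1) ^ α))) := fun _ _ => trivial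
      rw [← lintegral_map hofnat hτmeas, lintegral_countable']
      exact tsum_congr fun m => by
        rw [Measure.map_apply hτmeas (measurableSet_singleton m)]
    rw [heq]
    obtain ⟨N, hN⟩ := eventually_atTop.mp key
    set H : ℕ → ENNReal := fun m => if m ≤ N then ENNReal.ofReal
      (Real.exp ((1 - ε) * Real.log (max (a * (m : ℝ)) 1) ^ α)) else 0 with hHdef
    set W : ℕ → ENNReal := fun m => ENNReal.ofReal (((((m-1:ℕ)):ℝ))^2)⁻¹ with hWdef
    have hFle : ∀ m : ℕ, ENNReal.ofReal
        (Real.exp ((1 - ε) * Real.log (max (a * (m : ℝ)) 1) ^ α)) * μ (τ ⁻¹' {m})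
        ≤ H m + W m := by
      intro m
      rcases le_or_gt m N with hm | hm
      · have h1 : ENNReal.ofReal
            (Real.exp ((1 - ε) * Real.log (max (a * (m : ℝ)) 1) ^ α)) * μ (τ ⁻¹' {m})
            ≤ H m := by
          rw [hHdef]
          simp only [if_pos hm]
          have h5 := mul_le_mul_right (prob_le_one (μ := μ) (s := τ ⁻¹' {m}))
            (ENNReal.ofReal (Real.exp ((1 - ε) * Real.log (max (a * (m : ℝ)) 1) ^ α)))
          simpa using h5
        exact h1.trans le_self_add
      · obtain ⟨k, rfl⟩ : ∃ k, m = (k + N) + 1 := ⟨m - N - 1, by omega⟩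
        have hsub : τ ⁻¹' {(k+N)+1} ⊆ {ω | (k+N) < τ ω} := by
          intro ω h
          simp only [mem_preimage, mem_singleton_iff] at h
          simp only [mem_setOf_eq]
          omega
        have h2 : ENNReal.ofReal
            (Real.exp ((1 - ε) * Real.log (max (a * (((k+N)+1 : ℕ) : ℝ)) 1) ^ α))
              * μ (τ ⁻¹' {(k+N)+1})
            ≤ W ((k+N)+1) := by
          have h3 := hN (k+N) (by omega)
          have h4 : W ((k+N)+1) = ENNReal.ofReal (((((k+N:ℕ)):ℝ))^2)⁻¹ := by
            rw [hWdef]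
            norm_num
          rw [h4]
          exact le_trans (mul_le_mul_right (measure_mono hsub) _) h3
        exact le_trans h2 le_add_self
    calc ∑' m : ℕ, ENNReal.ofReal
          (Real.exp ((1 - ε) * Real.log (max (a * (m : ℝ)) 1) ^ α)) * μ (τ ⁻¹' {m})
        ≤ ∑' m : ℕ, (H m + W m) := ENNReal.tsum_le_tsum hFle
      _ = (∑' m : ℕ, H m) + ∑' m : ℕ, W m := ENNReal.tsum_add
      _ < ⊤ := by
          apply ENNReal.add_lt_top.mpr
          constructor
          · rw [tsum_eq_sum (s := Finset.range (N+1)) (fun b hb => by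
              simp only [hHdef]
              rw [if_neg (by simp only [Finset.mem_range] at hb; omega)])]
            rw [ENNReal.sum_lt_top]
            intro m _
            simp only [hHdef]
            split <;> simp [ENNReal.ofReal_lt_top]
          · have hsum1 : Summable (fun m : ℕ => (((m:ℝ))^2)⁻¹) := by
              have h' := (Real.summable_one_div_nat_pow (p := 2)).mpr (by norm_num)
              simpa [one_div] using h'
            have hsumu : Summable (fun m : ℕ => (((((m-1:ℕ)):ℝ))^2)⁻¹) := by
              apply (summable_nat_add_iff 1).mp
              simpa using hsum1
            rw [hWdef, ← ENNReal.ofReal_tsum_of_nonneg (fun m => by positivity) hsumu]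
            exact ENNReal.ofReal_lt_top
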